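/- Let ε = (ε¹₁,ε¹₂,ε²₁,ε²₂) ∈ [0,1/2]⁴. Then the following are equivalent: (a) for every p ∈ [0,1/2]⁴ with (p, ε) ∈ ELFP, one has max S₁p ≤ √2/2; (b) max S₀ε ≥ (3 − √2)/2. (This characterizes the set Force for the quantum ('quant') constraint.) -/

import Mathlib

set_option maxRecDepth 8000
set_option maxHeartbeats 1000000

open Finset

/-- The signed sum `±(x₁₁−¼) ± (x₁₂−¼) ± (x₂₁−¼) ± (x₂₂−¼)` over the four components of `x`,
with a `+` sign exactly where the sign choice `s` is `true`. -/
noncomputable def Sval (x : Fin 2 → Fin 2 → ℝ) (s : Fin 2 → Fin 2 → Bool) : ℝ :=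
  ∑ i : Fin 2, ∑ j : Fin 2, (if s i j then (1 : ℝ) else -1) * (x i j - 1 / 4)

/-- The number of `+` signs in a sign choice. -/
def plusCount (s : Fin 2 → Fin 2 → Bool) : ℕ :=
  (Finset.univ.filter fun ij : Fin 2 × Fin 2 => s ij.1 ij.2 = true).card

/-- `max Sx`: the maximum of the signed sums over all 16 sign choices. -/
noncomputable def maxS (x : Fin 2 → Fin 2 → ℝ) : ℝ :=
  Finset.univ.sup' Finset.univ_nonempty (Sval x)

/-- `max S₀x`: the maximum over sign choices with an even number of `+` signs. -/
noncomputable def maxS0 (x : Fin 2 → Fin 2 → ℝ) : ℝ :=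
  (Finset.univ.filter fun s : Fin 2 → Fin 2 → Bool => Even (plusCount s)).sup'
    ⟨fun _ _ => false, by decide⟩ (Sval x)

/-- `max S₁x`: the maximum over sign choices with an odd number of `+` signs. -/
noncomputable def maxS1 (x : Fin 2 → Fin 2 → ℝ) : ℝ :=
  (Finset.univ.filter fun s : Fin 2 → Fin 2 → Bool => ¬ Even (plusCount s)).sup'
    ⟨fun i j => i == 0 && j == 0, by decide⟩ (Sval x)

/-- `r ∈ S₀x`: `r` is one of the signed sums with an even number of `+` signs. -/
def memS0 (x : Fin 2 → Fin 2 → ℝ) (r : ℝ) : Prop :=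
  ∃ s : Fin 2 → Fin 2 → Bool, Even (plusCount s) ∧ Sval x s = r

/-- The Extended Linear Feasibility Polytope: `(p, ε) ∈ ELFP` iff there is a joint
distribution on `({−1,+1})⁸` — encoded as `Fin 2 → Fin 2 → Fin 2 → Bool`, `h k i j` being the
value of `Hᵏᵢⱼ` (`true` standing for `+1`) — with uniform ±1 one-dimensional marginals,
`Pr[H¹ᵢⱼ = +1, H²ᵢⱼ = +1] = p i j`, `Pr[H¹ᵢ₁ = +1, H¹ᵢ₂ = +1] = ε 0 i`, and
`Pr[H²₁ⱼ = +1, H²₂ⱼ = +1] = ε 1 j`. -/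
def ELFP (p ε : Fin 2 → Fin 2 → ℝ) : Prop :=
  ∃ μ : (Fin 2 → Fin 2 → Fin 2 → Bool) → ℝ,
    (∀ h, 0 ≤ μ h) ∧
    (∑ h : Fin 2 → Fin 2 → Fin 2 → Bool, μ h = 1) ∧
    (∀ k i j : Fin 2,
      ∑ h ∈ Finset.univ.filter
          (fun h : Fin 2 → Fin 2 → Fin 2 → Bool => h k i j = true), μ h = 1 / 2) ∧
    (∀ i j : Fin 2,
      ∑ h ∈ Finset.univ.filter
          (fun h : Fin 2 → Fin 2 → Fin 2 → Bool => h 0 i j = true ∧ h 1 i j = true), μ h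
        = p i j) ∧
    (∀ i : Fin 2,
      ∑ h ∈ Finset.univ.filter
          (fun h : Fin 2 → Fin 2 → Fin 2 → Bool => h 0 i 0 = true ∧ h 0 i 1 = true), μ h
        = ε 0 i) ∧
    (∀ j : Fin 2,
      ∑ h ∈ Finset.univ.filter
          (fun h : Fin 2 → Fin 2 → Fin 2 → Bool => h 1 0 j = true ∧ h 1 1 j = true), μ h
        = ε 1 j)

def sg (b : Bool) : ℝ := if b then 1 else -1

lemma sg_mul_le (b c : Bool) : sg b * sg c ≤ 1 := by
  cases b <;> cases c <;> norm_num [sg]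

lemma sg_mul_eq (b c : Bool) : sg b * sg c = 1 ∨ sg b * sg c = -1 := by
  cases b <;> cases c <;> norm_num [sg]

lemma sg_mul_eq_one {b c : Bool} (h : sg b * sg c = 1) : b = c := by
  revert h; cases b <;> cases c <;> norm_num [sg]

lemma parity_eq (h : Fin 2 → Fin 2 → Fin 2 → Bool) :
    xor (h 0 0 0 == h 1 0 0) (xor (h 0 0 1 == h 1 0 1) (xor (h 0 1 0 == h 1 1 0) (h 0 1 1 == h 1 1 1)))
    = xor (h 0 0 0 == h 0 0 1) (xor (h 0 1 0 == h 0 1 1) (xor (h 1 0 0 == h 1 1 0) (h 1 0 1 == h 1 1 1))) := by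
  revert h; decide

lemma oddXor (s : Fin 2 → Fin 2 → Bool) :
    ¬ Even (plusCount s) ↔ xor (s 0 0) (xor (s 0 1) (xor (s 1 0) (s 1 1))) = true := by
  revert s; decide

lemma evenXor (s : Fin 2 → Fin 2 → Bool) :
    Even (plusCount s) ↔ xor (s 0 0) (xor (s 0 1) (xor (s 1 0) (s 1 1))) = false := by
  revert s; decide
lemma G_le_six (σ τ : Fin 2 → Fin 2 → Bool) (hσ : ¬ Even (plusCount σ))
    (hτ : Even (plusCount τ)) (h : Fin 2 → Fin 2 → Fin 2 → Bool) :
    sg (σ 0 0) * sg (h 0 0 0 == h 1 0 0) + sg (σ 0 1) * sg (h 0 0 1 == h 1 0 1) +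
    sg (σ 1 0) * sg (h 0 1 0 == h 1 1 0) + sg (σ 1 1) * sg (h 0 1 1 == h 1 1 1) +
    sg (τ 0 0) * sg (h 0 0 0 == h 0 0 1) + sg (τ 0 1) * sg (h 0 1 0 == h 0 1 1) +
    sg (τ 1 0) * sg (h 1 0 0 == h 1 1 0) + sg (τ 1 1) * sg (h 1 0 1 == h 1 1 1) ≤ 6 := by
  by_contra hlt
  push_neg at hlt
  have l1 := sg_mul_le (σ 0 0) (h 0 0 0 == h 1 0 0)
  have l2 := sg_mul_le (σ 0 1) (h 0 0 1 == h 1 0 1)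
  have l3 := sg_mul_le (σ 1 0) (h 0 1 0 == h 1 1 0)
  have l4 := sg_mul_le (σ 1 1) (h 0 1 1 == h 1 1 1)
  have l5 := sg_mul_le (τ 0 0) (h 0 0 0 == h 0 0 1)
  have l6 := sg_mul_le (τ 0 1) (h 0 1 0 == h 0 1 1)
  have l7 := sg_mul_le (τ 1 0) (h 1 0 0 == h 1 1 0)
  have l8 := sg_mul_le (τ 1 1) (h 1 0 1 == h 1 1 1)
  have e1 : σ 0 0 = (h 0 0 0 == h 1 0 0) := by
    rcases sg_mul_eq (σ 0 0) (h 0 0 0 == h 1 0 0) with he | he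
    · exact sg_mul_eq_one he
    · linarith
  have e2 : σ 0 1 = (h 0 0 1 == h 1 0 1) := by
    rcases sg_mul_eq (σ 0 1) (h 0 0 1 == h 1 0 1) with he | he
    · exact sg_mul_eq_one he
    · linarith
  have e3 : σ 1 0 = (h 0 1 0 == h 1 1 0) := by
    rcases sg_mul_eq (σ 1 0) (h 0 1 0 == h 1 1 0) with he | he
    · exact sg_mul_eq_one he
    · linarith
  have e4 : σ 1 1 = (h 0 1 1 == h 1 1 1) := by
    rcases sg_mul_eq (σ 1 1) (h 0 1 1 == h 1 1 1) with he | he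
    · exact sg_mul_eq_one he
    · linarith
  have e5 : τ 0 0 = (h 0 0 0 == h 0 0 1) := by
    rcases sg_mul_eq (τ 0 0) (h 0 0 0 == h 0 0 1) with he | he
    · exact sg_mul_eq_one he
    · linarith
  have e6 : τ 0 1 = (h 0 1 0 == h 0 1 1) := by
    rcases sg_mul_eq (τ 0 1) (h 0 1 0 == h 0 1 1) with he | he
    · exact sg_mul_eq_one he
    · linarith
  have e7 : τ 1 0 = (h 1 0 0 == h 1 1 0) := by
    rcases sg_mul_eq (τ 1 0) (h 1 0 0 == h 1 1 0) with he | he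
    · exact sg_mul_eq_one he
    · linarith
  have e8 : τ 1 1 = (h 1 0 1 == h 1 1 1) := by
    rcases sg_mul_eq (τ 1 1) (h 1 0 1 == h 1 1 1) with he | he
    · exact sg_mul_eq_one he
    · linarith
  have hodd := (oddXor σ).mp hσ
  have heven := (evenXor τ).mp hτ
  rw [e1, e2, e3, e4, parity_eq h] at hodd
  rw [e5, e6, e7, e8] at heven
  rw [hodd] at heven
  exact Bool.noConfusion heven

lemma moment_pair (μ : (Fin 2 → Fin 2 → Fin 2 → Bool) → ℝ)
    (f g : (Fin 2 → Fin 2 → Fin 2 → Bool) → Bool) (q : ℝ)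
    (hfg : ∑ h ∈ Finset.univ.filter (fun h => f h = true ∧ g h = true), μ h = q)
    (hf : ∑ h ∈ Finset.univ.filter (fun h => f h = true), μ h = 1 / 2)
    (hg : ∑ h ∈ Finset.univ.filter (fun h => g h = true), μ h = 1 / 2)
    (htot : ∑ h, μ h = 1) :
    ∑ h, μ h * sg (f h == g h) = 4 * q - 1 := by
  have key : ∀ h, μ h * sg (f h == g h) =
      4 * (if f h = true ∧ g h = true then μ h else 0)
      - 2 * (if f h = true then μ h else 0) - 2 * (if g h = true then μ h else 0) + μ h := by
    intro h
    cases hfh : f h <;> cases hgh : g h <;> simp [sg] <;> ring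
  rw [Finset.sum_congr rfl (fun h _ => key h)]
  rw [Finset.sum_add_distrib, Finset.sum_sub_distrib, Finset.sum_sub_distrib,
    ← Finset.mul_sum, ← Finset.mul_sum, ← Finset.mul_sum,
    ← Finset.sum_filter, ← Finset.sum_filter, ← Finset.sum_filter, hfg, hf, hg, htot]
  ring
lemma easy_bound (p ε : Fin 2 → Fin 2 → ℝ) (hE : ELFP p ε)
    (σ τ : Fin 2 → Fin 2 → Bool) (hσ : ¬ Even (plusCount σ)) (hτ : Even (plusCount τ)) :
    Sval p σ + Sval ε τ ≤ 3 / 2 := by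
  obtain ⟨μ, hpos, htot, hmarg, hp4, he1, he2⟩ := hE
  have A00 := moment_pair μ (fun h => h 0 0 0) (fun h => h 1 0 0) (p 0 0)
    (hp4 0 0) (hmarg 0 0 0) (hmarg 1 0 0) htot
  have A01 := moment_pair μ (fun h => h 0 0 1) (fun h => h 1 0 1) (p 0 1)
    (hp4 0 1) (hmarg 0 0 1) (hmarg 1 0 1) htot
  have A10 := moment_pair μ (fun h => h 0 1 0) (fun h => h 1 1 0) (p 1 0)
    (hp4 1 0) (hmarg 0 1 0) (hmarg 1 1 0) htot
  have A11 := moment_pair μ (fun h => h 0 1 1) (fun h => h 1 1 1) (p 1 1)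
    (hp4 1 1) (hmarg 0 1 1) (hmarg 1 1 1) htot
  have B00 := moment_pair μ (fun h => h 0 0 0) (fun h => h 0 0 1) (ε 0 0)
    (he1 0) (hmarg 0 0 0) (hmarg 0 0 1) htot
  have B01 := moment_pair μ (fun h => h 0 1 0) (fun h => h 0 1 1) (ε 0 1)
    (he1 1) (hmarg 0 1 0) (hmarg 0 1 1) htot
  have B10 := moment_pair μ (fun h => h 1 0 0) (fun h => h 1 1 0) (ε 1 0)
    (he2 0) (hmarg 1 0 0) (hmarg 1 1 0) htot
  have B11 := moment_pair μ (fun h => h 1 0 1) (fun h => h 1 1 1) (ε 1 1)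
    (he2 1) (hmarg 1 0 1) (hmarg 1 1 1) htot
  have expand : ∀ h : Fin 2 → Fin 2 → Fin 2 → Bool,
      μ h * (sg (σ 0 0) * sg (h 0 0 0 == h 1 0 0) + sg (σ 0 1) * sg (h 0 0 1 == h 1 0 1) +
        sg (σ 1 0) * sg (h 0 1 0 == h 1 1 0) + sg (σ 1 1) * sg (h 0 1 1 == h 1 1 1) +
        sg (τ 0 0) * sg (h 0 0 0 == h 0 0 1) + sg (τ 0 1) * sg (h 0 1 0 == h 0 1 1) +
        sg (τ 1 0) * sg (h 1 0 0 == h 1 1 0) + sg (τ 1 1) * sg (h 1 0 1 == h 1 1 1)) =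
      sg (σ 0 0) * (μ h * sg (h 0 0 0 == h 1 0 0)) + sg (σ 0 1) * (μ h * sg (h 0 0 1 == h 1 0 1)) +
      sg (σ 1 0) * (μ h * sg (h 0 1 0 == h 1 1 0)) + sg (σ 1 1) * (μ h * sg (h 0 1 1 == h 1 1 1)) +
      sg (τ 0 0) * (μ h * sg (h 0 0 0 == h 0 0 1)) + sg (τ 0 1) * (μ h * sg (h 0 1 0 == h 0 1 1)) +
      sg (τ 1 0) * (μ h * sg (h 1 0 0 == h 1 1 0)) + sg (τ 1 1) * (μ h * sg (h 1 0 1 == h 1 1 1)) := by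
    intro h; ring
  have hsum : ∑ h : Fin 2 → Fin 2 → Fin 2 → Bool,
      μ h * (sg (σ 0 0) * sg (h 0 0 0 == h 1 0 0) + sg (σ 0 1) * sg (h 0 0 1 == h 1 0 1) +
        sg (σ 1 0) * sg (h 0 1 0 == h 1 1 0) + sg (σ 1 1) * sg (h 0 1 1 == h 1 1 1) +
        sg (τ 0 0) * sg (h 0 0 0 == h 0 0 1) + sg (τ 0 1) * sg (h 0 1 0 == h 0 1 1) +
        sg (τ 1 0) * sg (h 1 0 0 == h 1 1 0) + sg (τ 1 1) * sg (h 1 0 1 == h 1 1 1)) =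
      4 * Sval p σ + 4 * Sval ε τ := by
    rw [Finset.sum_congr rfl (fun h _ => expand h)]
    rw [Finset.sum_add_distrib, Finset.sum_add_distrib, Finset.sum_add_distrib,
      Finset.sum_add_distrib, Finset.sum_add_distrib, Finset.sum_add_distrib,
      Finset.sum_add_distrib]
    rw [← Finset.mul_sum, ← Finset.mul_sum, ← Finset.mul_sum, ← Finset.mul_sum,
      ← Finset.mul_sum, ← Finset.mul_sum, ← Finset.mul_sum, ← Finset.mul_sum]
    rw [A00, A01, A10, A11, B00, B01, B10, B11]
    simp only [Sval, Fin.sum_univ_two, sg]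
    ring
  have hle : ∑ h : Fin 2 → Fin 2 → Fin 2 → Bool,
      μ h * (sg (σ 0 0) * sg (h 0 0 0 == h 1 0 0) + sg (σ 0 1) * sg (h 0 0 1 == h 1 0 1) +
        sg (σ 1 0) * sg (h 0 1 0 == h 1 1 0) + sg (σ 1 1) * sg (h 0 1 1 == h 1 1 1) +
        sg (τ 0 0) * sg (h 0 0 0 == h 0 0 1) + sg (τ 0 1) * sg (h 0 1 0 == h 0 1 1) +
        sg (τ 1 0) * sg (h 1 0 0 == h 1 1 0) + sg (τ 1 1) * sg (h 1 0 1 == h 1 1 1)) ≤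
      ∑ h : Fin 2 → Fin 2 → Fin 2 → Bool, μ h * 6 := by
    apply Finset.sum_le_sum
    intro h _
    exact mul_le_mul_of_nonneg_left (G_le_six σ τ hσ hτ h) (hpos h)
  have h6 : ∑ h : Fin 2 → Fin 2 → Fin 2 → Bool, μ h * 6 = 6 := by
    rw [← Finset.sum_mul, htot]; ring
  rw [hsum, h6] at hle
  linarith
noncomputable def ov (s t a b : ℝ) : ℝ := max 0 (min t b - max s a)

lemma ov_nonneg (s t a b : ℝ) : 0 ≤ ov s t a b := le_max_left _ _

lemma ov_eq (s t a b : ℝ) (hab : a ≤ b) (hst : s ≤ t) :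
    ov s t a b = max s (min t b) - max s (min t a) := by
  simp only [ov, max_def, min_def]
  split_ifs <;> linarith

lemma ov_comm (s t a b : ℝ) : ov s t a b = ov a b s t := by
  simp only [ov, min_comm, max_comm]

lemma ov_split (s t a m b : ℝ) (ham : a ≤ m) (hmb : m ≤ b) (hst : s ≤ t) :
    ov s t a m + ov s t m b = ov s t a b := by
  rw [ov_eq _ _ _ _ ham hst, ov_eq _ _ _ _ hmb hst, ov_eq _ _ _ _ (ham.trans hmb) hst]
  ring

lemma ov_row (s t b1 b2 b3 : ℝ) (h0 : 0 ≤ s) (hst : s ≤ t) (ht : t ≤ 1)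
    (hb0 : 0 ≤ b1) (hb1 : b1 ≤ b2) (hb2 : b2 ≤ b3) (hb3 : b3 ≤ 1) :
    ov s t 0 b1 + ov s t b1 b2 + ov s t b2 b3 + ov s t b3 1 = t - s := by
  rw [ov_eq _ _ _ _ hb0 hst, ov_eq _ _ _ _ hb1 hst, ov_eq _ _ _ _ hb2 hst,
    ov_eq _ _ _ _ hb3 hst]
  have e0 : max s (min t 0) = s := by
    rw [min_eq_right (by linarith), max_eq_left h0]
  have e1 : max s (min t 1) = t := by rw [min_eq_left ht, max_eq_right hst]
  rw [e0, e1]; ring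

lemma ov_two (a1 a2 b : ℝ) (h0 : 0 ≤ a1) (h12 : a1 ≤ a2) (ha2 : a2 ≤ 1)
    (hb0 : 0 ≤ b) (hb1 : b ≤ 1) :
    ov 0 a1 b 1 + ov a1 a2 b 1 = max 0 (a2 - b) := by
  rw [ov_comm 0 a1 b 1, ov_comm a1 a2 b 1, ov_split b 1 0 a1 a2 h0 h12 hb1]
  rw [ov, min_eq_right ha2, max_eq_left hb0]

lemma ov_two2 (a2 a3 b : ℝ) (h23 : a2 ≤ a3) (h31 : a3 ≤ 1) (ha2 : 0 ≤ a2)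
    (hb0 : 0 ≤ b) (hb1 : b ≤ 1) :
    ov a2 a3 0 b + ov a3 1 0 b = max 0 (b - a2) := by
  rw [ov_comm a2 a3 0 b, ov_comm a3 1 0 b, ov_split 0 b a2 a3 1 h23 h31 hb0]
  rw [ov, min_eq_left hb1, max_eq_right ha2]

lemma max_abs (x : ℝ) : max 0 x + max 0 (-x) = |x| := by
  rcases le_total x 0 with h | h
  · rw [max_eq_left h, abs_of_nonpos h, max_eq_right (by linarith)]; ring
  · rw [max_eq_right h, abs_of_nonneg h, max_eq_left (by linarith)]; ring

lemma core (y₁ y₂ y₃ y₄ : ℝ)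
    (hy1 : 0 ≤ y₁) (hy1' : y₁ ≤ 1) (hy2 : 0 ≤ y₂) (hy2' : y₂ ≤ 1)
    (hy3 : 0 ≤ y₃) (hy3' : y₃ ≤ 1) (hy4 : 0 ≤ y₄) (hy4' : y₄ ≤ 1)
    (hl : |y₁ - y₂| + |y₃ - y₄| < 3 - Real.sqrt 2)
    (hu : Real.sqrt 2 - 1 < min (y₁ + y₂) (2 - y₁ - y₂) + min (y₃ + y₄) (2 - y₃ - y₄)) :
    ∃ (ν : Fin 4 → Fin 4 → ℝ) (K : ℝ),
      (∀ i j, 0 ≤ ν i j) ∧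
      |K| < 2 - Real.sqrt 2 ∧
      (ν 0 0 + ν 0 1 + ν 0 2 + ν 0 3 + ν 1 0 + ν 1 1 + ν 1 2 + ν 1 3 +
       ν 2 0 + ν 2 1 + ν 2 2 + ν 2 3 + ν 3 0 + ν 3 1 + ν 3 2 + ν 3 3 = 1) ∧
      (ν 0 0 + ν 0 1 + ν 0 2 + ν 0 3 + ν 2 0 + ν 2 1 + ν 2 2 + ν 2 3 = y₁) ∧
      (ν 0 0 + ν 0 1 + ν 0 2 + ν 0 3 + ν 3 0 + ν 3 1 + ν 3 2 + ν 3 3 = y₂) ∧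
      (ν 0 0 + ν 1 0 + ν 2 0 + ν 3 0 + ν 0 2 + ν 1 2 + ν 2 2 + ν 3 2 = y₃) ∧
      (ν 0 1 + ν 1 1 + ν 2 1 + ν 3 1 + ν 0 2 + ν 1 2 + ν 2 2 + ν 3 2 = y₄) ∧
      (ν 0 2 + ν 0 3 + ν 1 2 + ν 1 3 + ν 2 0 + ν 2 1 + ν 3 0 + ν 3 1 = |K|) := by
  have hs2 : Real.sqrt 2 < 2 := by
    nlinarith [Real.sq_sqrt (by norm_num : (0:ℝ) ≤ 2), Real.sqrt_nonneg 2]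
  have hl1u : |y₁ - y₂| ≤ min (y₁ + y₂) (2 - y₁ - y₂) := le_min
    (abs_le.mpr ⟨by linarith, by linarith⟩) (abs_le.mpr ⟨by linarith, by linarith⟩)
  have hl2u : |y₃ - y₄| ≤ min (y₃ + y₄) (2 - y₃ - y₄) := le_min
    (abs_le.mpr ⟨by linarith, by linarith⟩) (abs_le.mpr ⟨by linarith, by linarith⟩)
  have hl1n : (0:ℝ) ≤ |y₁ - y₂| := abs_nonneg _
  have hl2n : (0:ℝ) ≤ |y₃ - y₄| := abs_nonneg _
  have hu1a : min (y₁ + y₂) (2 - y₁ - y₂) ≤ y₁ + y₂ := min_le_left _ _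
  have hu1b : min (y₁ + y₂) (2 - y₁ - y₂) ≤ 2 - y₁ - y₂ := min_le_right _ _
  have hu2a : min (y₃ + y₄) (2 - y₃ - y₄) ≤ y₃ + y₄ := min_le_left _ _
  have hu2b : min (y₃ + y₄) (2 - y₃ - y₄) ≤ 2 - y₃ - y₄ := min_le_right _ _
  set γ₁ := max |y₁ - y₂| (min (min (y₁ + y₂) (2 - y₁ - y₂)) (1 - |y₃ - y₄|)) with hg1def
  have hg1l : |y₁ - y₂| ≤ γ₁ := le_max_left _ _
  have hg1u : γ₁ ≤ min (y₁ + y₂) (2 - y₁ - y₂) := max_le hl1u (min_le_left _ _)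
  set γ₂ := max |y₃ - y₄| (min (min (y₃ + y₄) (2 - y₃ - y₄)) (1 - γ₁)) with hg2def
  have hg2l : |y₃ - y₄| ≤ γ₂ := le_max_left _ _
  have hg2u : γ₂ ≤ min (y₃ + y₄) (2 - y₃ - y₄) := max_le hl2u (min_le_left _ _)
  have habs1 : -γ₁ ≤ y₁ - y₂ ∧ y₁ - y₂ ≤ γ₁ := abs_le.mp hg1l
  have habs2 : -γ₂ ≤ y₃ - y₄ ∧ y₃ - y₄ ≤ γ₂ := abs_le.mp hg2l
  have hg1a : γ₁ ≤ y₁ + y₂ := hg1u.trans hu1a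
  have hg1b : γ₁ ≤ 2 - y₁ - y₂ := hg1u.trans hu1b
  have hg2a : γ₂ ≤ y₃ + y₄ := hg2u.trans hu2a
  have hg2b : γ₂ ≤ 2 - y₃ - y₄ := hg2u.trans hu2b
  have hg1n : 0 ≤ γ₁ := hl1n.trans hg1l
  have hg2n : 0 ≤ γ₂ := hl2n.trans hg2l
  have hKbound : |1 - γ₁ - γ₂| < 2 - Real.sqrt 2 := by
    rcases le_or_gt (|y₃ - y₄|) (1 - γ₁) with c1 | c1
    · rcases le_or_gt (1 - γ₁) (min (y₃ + y₄) (2 - y₃ - y₄)) with c2 | c2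
      · have hγ2 : γ₂ = 1 - γ₁ := by
          rw [hg2def, min_eq_right c2, max_eq_right c1]
        rw [hγ2]
        have h0 : 1 - γ₁ - (1 - γ₁) = 0 := by ring
        rw [h0, abs_zero]; linarith
      · have hγ2 : γ₂ = min (y₃ + y₄) (2 - y₃ - y₄) := by
          rw [hg2def, min_eq_left c2.le, max_eq_right hl2u]
        have hKpos : 0 < 1 - γ₁ - γ₂ := by rw [hγ2]; linarith
        rw [abs_of_pos hKpos]
        rcases le_total (min (y₁ + y₂) (2 - y₁ - y₂)) (1 - |y₃ - y₄|) with c3 | c3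
        · have hg1ge : min (y₁ + y₂) (2 - y₁ - y₂) ≤ γ₁ := by
            rw [hg1def, min_eq_left c3]; exact le_max_right _ _
          rw [hγ2]; linarith
        · have hg1ge : 1 - |y₃ - y₄| ≤ γ₁ := by
            rw [hg1def, min_eq_right c3]; exact le_max_right _ _
          rw [hγ2]
          have : γ₂ = min (y₃ + y₄) (2 - y₃ - y₄) := hγ2
          linarith [hl2u]
    · have hγ2 : γ₂ = |y₃ - y₄| := by
        rw [hg2def]
        exact max_eq_left ((min_le_right _ _).trans c1.le)
      have hKneg : 1 - γ₁ - γ₂ < 0 := by rw [hγ2]; linarith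
      rw [abs_of_neg hKneg]
      rcases le_total (|y₁ - y₂|) (1 - |y₃ - y₄|) with c3 | c3
      · have hg1le : γ₁ ≤ 1 - |y₃ - y₄| := by
          rw [hg1def]; exact max_le c3 (min_le_right _ _)
        rw [hγ2]; linarith
      · have hg1le : γ₁ ≤ |y₁ - y₂| := by
          rw [hg1def]; exact max_le (le_refl _) ((min_le_right _ _).trans c3)
        rw [hγ2]; linarith
  -- ordering facts for cut points
  have hA01 : (0:ℝ) ≤ (y₁ + y₂ - γ₁) / 2 := by linarith
  have hA12 : (y₁ + y₂ - γ₁) / 2 ≤ 1 - γ₁ := by linarith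
  have hA23 : (1 - γ₁ : ℝ) ≤ 1 - γ₁ + (γ₁ + y₁ - y₂) / 2 := by linarith [habs1.1]
  have hA34 : (1 - γ₁ + (γ₁ + y₁ - y₂) / 2 : ℝ) ≤ 1 := by linarith [habs1.2]
  have hB01 : (0:ℝ) ≤ (γ₂ + y₃ - y₄) / 2 := by linarith [habs2.1]
  have hB12 : ((γ₂ + y₃ - y₄) / 2 : ℝ) ≤ γ₂ := by linarith [habs2.2]
  have hB23 : (γ₂ : ℝ) ≤ γ₂ + (y₃ + y₄ - γ₂) / 2 := by linarith
  have hB34 : (γ₂ + (y₃ + y₄ - γ₂) / 2 : ℝ) ≤ 1 := by linarith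
  refine ⟨fun i j =>
      ov (![0, (y₁ + y₂ - γ₁) / 2, 1 - γ₁, 1 - γ₁ + (γ₁ + y₁ - y₂) / 2] i)
        (![(y₁ + y₂ - γ₁) / 2, 1 - γ₁, 1 - γ₁ + (γ₁ + y₁ - y₂) / 2, 1] i)
        (![0, (γ₂ + y₃ - y₄) / 2, γ₂, γ₂ + (y₃ + y₄ - γ₂) / 2] j)
        (![(γ₂ + y₃ - y₄) / 2, γ₂, γ₂ + (y₃ + y₄ - γ₂) / 2, 1] j),
      1 - γ₁ - γ₂, fun i j => ov_nonneg _ _ _ _, hKbound, ?_, ?_, ?_, ?_, ?_, ?_⟩ <;>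
    simp only [Matrix.cons_val_zero, Matrix.cons_val_one, Matrix.head_cons,
      Matrix.cons_val_two, Matrix.tail_cons, Matrix.cons_val_three]
  · -- total
    have r0 := ov_row 0 ((y₁ + y₂ - γ₁) / 2) _ _ _ le_rfl hA01 (by linarith) hB01 hB12 hB23 hB34
    have r1 := ov_row ((y₁ + y₂ - γ₁) / 2) (1 - γ₁) _ _ _ hA01 hA12 (by linarith) hB01 hB12 hB23 hB34
    have r2 := ov_row (1 - γ₁) (1 - γ₁ + (γ₁ + y₁ - y₂) / 2) _ _ _ (by linarith) hA23 hA34 hB01 hB12 hB23 hB34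
    have r3 := ov_row (1 - γ₁ + (γ₁ + y₁ - y₂) / 2) 1 _ _ _ (by linarith) hA34 le_rfl hB01 hB12 hB23 hB34
    linarith
  · -- y₁ : rows 0 and 2
    have r0 := ov_row 0 ((y₁ + y₂ - γ₁) / 2) _ _ _ le_rfl hA01 (by linarith) hB01 hB12 hB23 hB34
    have r2 := ov_row (1 - γ₁) (1 - γ₁ + (γ₁ + y₁ - y₂) / 2) _ _ _ (by linarith) hA23 hA34 hB01 hB12 hB23 hB34
    linarith
  · -- y₂ : rows 0 and 3
    have r0 := ov_row 0 ((y₁ + y₂ - γ₁) / 2) _ _ _ le_rfl hA01 (by linarith) hB01 hB12 hB23 hB34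
    have r3 := ov_row (1 - γ₁ + (γ₁ + y₁ - y₂) / 2) 1 _ _ _ (by linarith) hA34 le_rfl hB01 hB12 hB23 hB34
    linarith
  · -- y₃ : cols 0 and 2
    have c0 := ov_row 0 ((γ₂ + y₃ - y₄) / 2) _ _ _ le_rfl hB01 (by linarith) hA01 hA12 hA23 hA34
    have c2 := ov_row γ₂ (γ₂ + (y₃ + y₄ - γ₂) / 2) _ _ _ (by linarith) hB23 hB34 hA01 hA12 hA23 hA34
    simp only [ov_comm] at c0 c2 ⊢
    linarith
  · -- y₄ : cols 1 and 2
    have c1 := ov_row ((γ₂ + y₃ - y₄) / 2) γ₂ _ _ _ hB01 hB12 (by linarith) hA01 hA12 hA23 hA34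
    have c2 := ov_row γ₂ (γ₂ + (y₃ + y₄ - γ₂) / 2) _ _ _ (by linarith) hB23 hB34 hA01 hA12 hA23 hA34
    simp only [ov_comm] at c1 c2 ⊢
    linarith
  · -- block sum = |K|
    have s1a := ov_split 0 ((y₁ + y₂ - γ₁) / 2) γ₂ (γ₂ + (y₃ + y₄ - γ₂) / 2) 1 hB23 hB34 hA01
    have s1b := ov_split ((y₁ + y₂ - γ₁) / 2) (1 - γ₁) γ₂ (γ₂ + (y₃ + y₄ - γ₂) / 2) 1 hB23 hB34 hA12
    have s1 := ov_two ((y₁ + y₂ - γ₁) / 2) (1 - γ₁) γ₂ hA01 hA12 (by linarith) hg2n (by linarith)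
    have s2a := ov_split (1 - γ₁) (1 - γ₁ + (γ₁ + y₁ - y₂) / 2) 0 ((γ₂ + y₃ - y₄) / 2) γ₂ hB01 hB12 hA23
    have s2b := ov_split (1 - γ₁ + (γ₁ + y₁ - y₂) / 2) 1 0 ((γ₂ + y₃ - y₄) / 2) γ₂ hB01 hB12 hA34
    have s2 := ov_two2 (1 - γ₁) (1 - γ₁ + (γ₁ + y₁ - y₂) / 2) γ₂ hA23 hA34 (by linarith) hg2n (by linarith)
    have hmax := max_abs (1 - γ₁ - γ₂)
    have hneg : γ₂ - (1 - γ₁) = -(1 - γ₁ - γ₂) := by ring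
    rw [hneg] at s2
    linarith
/-- The four row types: values of (A₁, A₂). -/
def Rrow : Fin 4 → Bool × Bool := ![(true, true), (false, false), (true, false), (false, true)]

/-- The four column types: values of (B₁, B₂). -/
def Ccol : Fin 4 → Bool × Bool := ![(true, false), (false, true), (true, true), (false, false)]

/-- The deterministic configuration attached to a cell. -/
def atomF (r s : Bool × Bool) : Fin 2 → Fin 2 → Fin 2 → Bool :=
  ![![![true, r.1], ![s.1, r.2 == s.1]], ![![true, r.1], ![s.1, r.1 == s.2]]]

/-- Its global spin flip. -/
def flipF (r s : Bool × Bool) : Fin 2 → Fin 2 → Fin 2 → Bool :=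
  fun k i j => !(atomF r s k i j)

/-- The constructed distribution. -/
noncomputable def muF (ν : Fin 4 → Fin 4 → ℝ) : (Fin 2 → Fin 2 → Fin 2 → Bool) → ℝ :=
  fun h => ∑ i : Fin 4, ∑ j : Fin 4, (ν i j / 2) *
    ((if h = atomF (Rrow i) (Ccol j) then (1:ℝ) else 0) +
     (if h = flipF (Rrow i) (Ccol j) then (1:ℝ) else 0))

lemma musum_tot (ν : Fin 4 → Fin 4 → ℝ) :
    ∑ h : Fin 2 → Fin 2 → Fin 2 → Bool, muF ν h = ∑ i : Fin 4, ∑ j : Fin 4, ν i j := by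
  unfold muF
  rw [Finset.sum_comm]
  refine Finset.sum_congr rfl fun i _ => ?_
  rw [Finset.sum_comm]
  refine Finset.sum_congr rfl fun j _ => ?_
  rw [← Finset.mul_sum, Finset.sum_add_distrib,
    Finset.sum_ite_eq' Finset.univ, Finset.sum_ite_eq' Finset.univ]
  simp
  ring

lemma musum (ν : Fin 4 → Fin 4 → ℝ) (P : (Fin 2 → Fin 2 → Fin 2 → Bool) → Prop)
    [DecidablePred P] :
    ∑ h ∈ Finset.univ.filter P, muF ν h = ∑ i : Fin 4, ∑ j : Fin 4, (ν i j / 2) *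
      ((if P (atomF (Rrow i) (Ccol j)) then (1:ℝ) else 0) +
       (if P (flipF (Rrow i) (Ccol j)) then (1:ℝ) else 0)) := by
  unfold muF
  rw [Finset.sum_comm]
  refine Finset.sum_congr rfl fun i _ => ?_
  rw [Finset.sum_comm]
  refine Finset.sum_congr rfl fun j _ => ?_
  rw [← Finset.mul_sum, Finset.sum_add_distrib,
    Finset.sum_ite_eq' (Finset.univ.filter P), Finset.sum_ite_eq' (Finset.univ.filter P)]
  simp [Finset.mem_filter]
/-- the Force set for the quantum ("quant") constraint:
every `p ∈ [0,1/2]⁴` compatible with `ε` satisfies `max S₁p ≤ √2/2` iff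
`max S₀ε ≥ (3 − √2)/2`. -/
theorem force_quant
    (ε : Fin 2 → Fin 2 → ℝ)
    (hε : ∀ k i, ε k i ∈ Set.Icc (0 : ℝ) (1 / 2)) :
    (∀ p : Fin 2 → Fin 2 → ℝ, (∀ i j, p i j ∈ Set.Icc (0 : ℝ) (1 / 2)) →
        ELFP p ε → maxS1 p ≤ Real.sqrt 2 / 2) ↔
      (3 - Real.sqrt 2) / 2 ≤ maxS0 ε := by
  have hs2 : Real.sqrt 2 < 2 := by
    nlinarith [Real.sq_sqrt (by norm_num : (0:ℝ) ≤ 2), Real.sqrt_nonneg 2]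
  have hs1 : 1 < Real.sqrt 2 := by
    nlinarith [Real.sq_sqrt (by norm_num : (0:ℝ) ≤ 2), Real.sqrt_nonneg 2]
  constructor
  · intro ha
    by_contra hb
    push_neg at hb
    unfold maxS0 at hb
    have hev : ∀ τ : Fin 2 → Fin 2 → Bool, Even (plusCount τ) →
        Sval ε τ < (3 - Real.sqrt 2) / 2 := fun τ hτ =>
      lt_of_le_of_lt (Finset.le_sup' (Sval ε)
        (Finset.mem_filter.mpr ⟨Finset.mem_univ _, hτ⟩)) hb
    have e1 := hev ![![true, true], ![true, true]] (by decide)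
    have e2 := hev ![![true, true], ![false, false]] (by decide)
    have e3 := hev ![![false, false], ![true, true]] (by decide)
    have e4 := hev ![![false, false], ![false, false]] (by decide)
    have e5 := hev ![![true, false], ![true, false]] (by decide)
    have e6 := hev ![![true, false], ![false, true]] (by decide)
    have e7 := hev ![![false, true], ![true, false]] (by decide)
    have e8 := hev ![![false, true], ![false, true]] (by decide)
    simp only [Sval, Fin.sum_univ_two, Matrix.cons_val_zero, Matrix.cons_val_one,
      Matrix.head_cons, if_true, Bool.false_eq_true, if_false] at e1 e2 e3 e4 e5 e6 e7 e8
    obtain ⟨ν, K, hnn, hK, htot, hr1, hr2, hc1, hc2, hblk⟩ :=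
      core (2 * ε 0 0) (2 * ε 0 1) (2 * ε 1 0) (2 * ε 1 1)
        (by linarith [(hε 0 0).1]) (by linarith [(hε 0 0).2])
        (by linarith [(hε 0 1).1]) (by linarith [(hε 0 1).2])
        (by linarith [(hε 1 0).1]) (by linarith [(hε 1 0).2])
        (by linarith [(hε 1 1).1]) (by linarith [(hε 1 1).2])
        (by
          rcases abs_cases (2 * ε 0 0 - 2 * ε 0 1) with ⟨h1, _⟩ | ⟨h1, _⟩ <;>
          rcases abs_cases (2 * ε 1 0 - 2 * ε 1 1) with ⟨h2, _⟩ | ⟨h2, _⟩ <;>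
          rw [h1, h2] <;> linarith)
        (by
          rcases min_cases (2 * ε 0 0 + 2 * ε 0 1) (2 - 2 * ε 0 0 - 2 * ε 0 1) with
            ⟨h1, _⟩ | ⟨h1, _⟩ <;>
          rcases min_cases (2 * ε 1 0 + 2 * ε 1 1) (2 - 2 * ε 1 0 - 2 * ε 1 1) with
            ⟨h2, _⟩ | ⟨h2, _⟩ <;>
          rw [h1, h2] <;> linarith)
    have hKn : 0 ≤ |K| := abs_nonneg K
    have hK1 : |K| ≤ 1 := by linarith
    have hple : ∀ i j : Fin 2,
        (![![(1:ℝ)/2, 1/2], ![1/2, |K|/2]] i j) ∈ Set.Icc (0:ℝ) (1/2) := by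
      intro i j
      fin_cases i <;> fin_cases j <;> refine ⟨by norm_num <;> linarith, by norm_num <;> linarith⟩
    have hELFP : ELFP (![![(1:ℝ)/2, 1/2], ![1/2, |K|/2]]) ε := by
      refine ⟨muF ν, ?_, ?_, ?_, ?_, ?_, ?_⟩
      · intro h
        refine Finset.sum_nonneg fun i _ => Finset.sum_nonneg fun j _ =>
          mul_nonneg (by linarith [hnn i j]) ?_
        positivity
      · rw [musum_tot]
        simp only [Fin.sum_univ_four]
        linarith
      · intro k i j
        fin_cases k <;> fin_cases i <;> fin_cases j <;>
          · rw [musum]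
            simp [Fin.sum_univ_four, atomF, flipF, Rrow, Ccol]
            try linarith
      · intro i j
        fin_cases i <;> fin_cases j <;>
          · rw [musum]
            simp [Fin.sum_univ_four, atomF, flipF, Rrow, Ccol]
            try linarith
      · intro i
        fin_cases i <;>
          · rw [musum]
            simp [Fin.sum_univ_four, atomF, flipF, Rrow, Ccol]
            try linarith
      · intro j
        fin_cases j <;>
          · rw [musum]
            simp [Fin.sum_univ_four, atomF, flipF, Rrow, Ccol]
            try linarith
    have hmax := ha _ hple hELFP
    have hmem : ![![true, true], ![true, false]] ∈
        Finset.univ.filter (fun s : Fin 2 → Fin 2 → Bool => ¬ Even (plusCount s)) := by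
      decide
    have hup : Sval (![![(1:ℝ)/2, 1/2], ![1/2, |K|/2]]) ![![true, true], ![true, false]] ≤
        maxS1 (![![(1:ℝ)/2, 1/2], ![1/2, |K|/2]]) := by
      unfold maxS1
      exact Finset.le_sup' _ hmem
    have hlow : Sval (![![(1:ℝ)/2, 1/2], ![1/2, |K|/2]]) ![![true, true], ![true, false]] =
        1 - |K|/2 := by
      simp [Sval, Fin.sum_univ_two]
      ring
    rw [hlow] at hup
    linarith
  · intro hb p hp hE
    unfold maxS1
    apply Finset.sup'_le
    intro σ hσmem
    have hσodd := (Finset.mem_filter.mp hσmem).2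
    unfold maxS0 at hb
    obtain ⟨τ, hτmem, hτeq⟩ := Finset.exists_mem_eq_sup'
      (⟨fun _ _ => false, by decide⟩ :
        (Finset.univ.filter fun s : Fin 2 → Fin 2 → Bool => Even (plusCount s)).Nonempty)
      (Sval ε)
    have hτeven := (Finset.mem_filter.mp hτmem).2
    have h1 := easy_bound p ε hE σ τ hσodd hτeven
    rw [hτeq] at hb
    linarith
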